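/- Every ℤ/2-graded division algebra A = A₀ ⊕ A₁ over ℝ with A₀ ≅ ℍ and A₁ ≠ 0 contains a degree-1 element e that commutes with all of A₀ and satisfies e² = 1 or e² = -1; hence A ≅ ℍ[e]/⟨e² = ±1⟩ as a graded algebra. -/

import Mathlib

open Quaternion DirectSum

private theorem sum_decompose' {A : Type*} [Ring A] [Algebra ℝ A]
    (𝒜 : ZMod 2 → Submodule ℝ A) [GradedAlgebra 𝒜] (x : A) :
    (decompose 𝒜 x 0 : A) + (decompose 𝒜 x 1 : A) = x := by
  have h2 : ∑ i : ZMod 2, (decompose 𝒜 x i : A) = x := by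
    conv_rhs => rw [← Equiv.symm_apply_apply (decompose 𝒜) x,
      ← DirectSum.sum_univ_of (decompose 𝒜 x)]
    rw [decompose_symm_sum]
    simp_rw [decompose_symm_of]
  rw [show (Finset.univ : Finset (ZMod 2)) = {0, 1} from rfl,
    Finset.sum_insert (by decide), Finset.sum_singleton] at h2
  exact h2

private noncomputable def qI : ℍ[ℝ] := ⟨0,1,0,0⟩
private noncomputable def qJ : ℍ[ℝ] := ⟨0,0,1,0⟩
@[simp] private theorem qI_re : qI.re = 0 := rfl
@[simp] private theorem qI_imI : qI.imI = 1 := rfl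
@[simp] private theorem qI_imJ : qI.imJ = 0 := rfl
@[simp] private theorem qI_imK : qI.imK = 0 := rfl
@[simp] private theorem qJ_re : qJ.re = 0 := rfl
@[simp] private theorem qJ_imI : qJ.imI = 0 := rfl
@[simp] private theorem qJ_imJ : qJ.imJ = 1 := rfl
@[simp] private theorem qJ_imK : qJ.imK = 0 := rfl
private theorem qII : qI * qI = -1 := by ext <;> simp [Quaternion.re_mul, Quaternion.imI_mul, Quaternion.imJ_mul, Quaternion.imK_mul]
private theorem qJJ : qJ * qJ = -1 := by ext <;> simp [Quaternion.re_mul, Quaternion.imI_mul, Quaternion.imJ_mul, Quaternion.imK_mul]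
private theorem qIJ : qI * qJ = -(qJ * qI) := by ext <;> simp [Quaternion.re_mul, Quaternion.imI_mul, Quaternion.imJ_mul, Quaternion.imK_mul]
private theorem qIne : qI ≠ 0 := fun h => by simpa [qI] using congrArg QuaternionAlgebra.imI h
private theorem qJne : qJ ≠ 0 := fun h => by simpa [qJ] using congrArg QuaternionAlgebra.imJ h

private theorem central_real' (c : ℍ[ℝ]) (hi : c * qI = qI * c) (hj : c * qJ = qJ * c) :
    c = algebraMap ℝ ℍ[ℝ] c.re := by
  rw [Quaternion.ext_iff] at hi hj ⊢
  simp [Quaternion.re_mul, Quaternion.imI_mul, Quaternion.imJ_mul, Quaternion.imK_mul] at hi hj ⊢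
  refine ⟨?_, ?_, ?_⟩ <;> linarith [hi.1, hi.2, hj.1, hj.2]

private theorem qdecomp (x : ℍ[ℝ]) :
    x = x.re • 1 + x.imI • qI + x.imJ • qJ + x.imK • (qI * qJ) := by
  ext <;> simp [Quaternion.re_mul, Quaternion.imI_mul, Quaternion.imJ_mul, Quaternion.imK_mul, Quaternion.re_smul]

private theorem exists_conj' (u v : ℍ[ℝ]) (hu : u * u = -1) (hv : v * v = -1)
    (huv : u * v = -(v * u)) :
    ∃ q : ℍ[ℝ], q ≠ 0 ∧ u * q = q * qI ∧ v * q = q * qJ := by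
  obtain ⟨p, hp0, hp⟩ : ∃ p : ℍ[ℝ], p ≠ 0 ∧ u * p = p * qI := by
    by_cases h : u + qI = 0
    · refine ⟨qJ, qJne, ?_⟩
      have hu' : u = -qI := eq_neg_of_add_eq_zero_left h
      rw [hu', neg_mul, qIJ, neg_neg]
    · exact ⟨u + qI, h, by rw [mul_add, add_mul, hu, qII]; abel⟩
  by_cases hq : p - v * p * qJ = 0
  · have h1 : v * p * qJ = p := (sub_eq_zero.mp hq).symm
    have h2 : v * p * qJ * qJ = p * qJ := by rw [h1]
    rw [mul_assoc, qJJ, mul_neg_one] at h2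
    have hvp : v * p = -(p * qJ) := neg_eq_iff_eq_neg.mp h2
    refine ⟨p * qI, mul_ne_zero hp0 qIne, ?_, ?_⟩
    · rw [← mul_assoc, hp]
    · rw [← mul_assoc, hvp, neg_mul, mul_assoc, mul_assoc, qIJ]
      simp [mul_assoc]
  · refine ⟨p - v * p * qJ, hq, ?_, ?_⟩
    · have huvp : u * (v * p) = -(v * (u * p)) := by
        rw [← mul_assoc, huv, neg_mul, mul_assoc]
      rw [mul_sub, sub_mul, hp, ← mul_assoc, huvp, hp, neg_mul, mul_assoc, mul_assoc,
        mul_assoc, qIJ]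
      simp [mul_assoc]
    · rw [mul_sub, sub_mul, ← mul_assoc, ← mul_assoc, hv, neg_one_mul, mul_assoc, qJJ,
        mul_neg_one]
      simp only [neg_mul, sub_neg_eq_add]
      abel

set_option maxHeartbeats 1000000 in
set_option synthInstance.maxHeartbeats 200000 in
/-- Every `ℤ/2`-graded division algebra over `ℝ` with `A₀ ≅ ℍ` and `A₁ ≠ 0` contains a
degree-1 element `e` commuting with all of `A₀` with `e² = ±1`; hence `A ≅ ℍ[e]/⟨e² = ±1⟩`. -/
theorem graded_division_algebra_deg0_quaternion {A : Type*} [Ring A] [Algebra ℝ A]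
    [FiniteDimensional ℝ A]
    (𝒜 : ZMod 2 → Submodule ℝ A) [GradedAlgebra 𝒜]
    (hdiv : ∀ (i : ZMod 2) (a : A), a ∈ 𝒜 i → a ≠ 0 → IsUnit a)
    (f : ℍ[ℝ] →ₐ[ℝ] A) (hf : Function.Injective f)
    (h0 : Subalgebra.toSubmodule f.range = 𝒜 0)
    (h1 : 𝒜 1 ≠ ⊥) :
    ∃ e : A, e ∈ 𝒜 1 ∧ (∀ a ∈ 𝒜 0, e * a = a * e) ∧ (e * e = 1 ∨ e * e = -1) ∧
      ∀ x : A, ∃ q q' : ℍ[ℝ], x = f q + f q' * e := by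
  have hA : (1 : A) ≠ 0 := fun h =>
    one_ne_zero (α := ℍ[ℝ]) (hf (by rw [map_one, map_zero, h]))
  haveI : Nontrivial A := nontrivial_of_ne 1 0 hA
  have hmem : ∀ a : A, a ∈ 𝒜 0 ↔ ∃ x, f x = a := fun a => by
    rw [← h0, Subalgebra.mem_toSubmodule, AlgHom.mem_range]
  have fmem : ∀ x : ℍ[ℝ], f x ∈ 𝒜 0 := fun x => (hmem _).mpr ⟨x, rfl⟩
  -- pick a nonzero homogeneous element of degree 1
  obtain ⟨u₀, hu₀1, hu₀0⟩ := Submodule.ne_bot_iff _ |>.mp h1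
  obtain ⟨U, hU⟩ := hdiv 1 u₀ hu₀1 hu₀0
  have hUu : (↑U⁻¹ : A) * u₀ = 1 := by rw [← hU]; exact U.inv_mul
  have hu₀U : u₀ * (↑U⁻¹ : A) = 1 := by rw [← hU]; exact U.mul_inv
  -- the inverse is homogeneous of degree 1
  have hUinv : (↑U⁻¹ : A) ∈ 𝒜 1 := by
    set b : A := (↑U⁻¹ : A) with hb
    have hsum : (decompose 𝒜 b 0 : A) + (decompose 𝒜 b 1 : A) = b := sum_decompose' 𝒜 b
    set b₀ : A := (decompose 𝒜 b 0 : A) with hb₀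
    set b₁ : A := (decompose 𝒜 b 1 : A) with hb₁
    have hb₀m : b₀ ∈ 𝒜 0 := SetLike.coe_mem _
    have hb₁m : b₁ ∈ 𝒜 1 := SetLike.coe_mem _
    have hone : (1 : A) = u₀ * b₀ + u₀ * b₁ := by rw [← mul_add, hsum, hu₀U]
    have hm10 : u₀ * b₀ ∈ 𝒜 1 := by
      have := SetLike.mul_mem_graded hu₀1 hb₀m
      rwa [show (1 + 0 : ZMod 2) = 1 from rfl] at this
    have hm11 : u₀ * b₁ ∈ 𝒜 0 := by
      have := SetLike.mul_mem_graded hu₀1 hb₁m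
      rwa [show (1 + 1 : ZMod 2) = 0 from rfl] at this
    have hz : u₀ * b₀ = 0 := by
      have h1' : (decompose 𝒜 (1 : A) 1 : A) = 0 :=
        decompose_of_mem_ne 𝒜 (SetLike.one_mem_graded 𝒜) (by decide)
      rw [hone, DirectSum.decompose_add] at h1'
      rw [DirectSum.add_apply, Submodule.coe_add, decompose_of_mem_same 𝒜 hm10,
        decompose_of_mem_ne 𝒜 hm11 (by decide), add_zero] at h1'
      exact h1'
    have hb₀z : b₀ = 0 := by
      have : (↑U⁻¹ : A) * (u₀ * b₀) = b₀ := by rw [← mul_assoc, hUu, one_mul]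
      rw [hz, mul_zero] at this
      exact this.symm
    have hbb : b = b₁ := by rw [← hsum, hb₀z, zero_add]
    show b ∈ 𝒜 1
    rw [hbb]
    exact hb₁m
  -- conjugation by u₀ preserves degree 0 = range of f
  have key : ∀ x : ℍ[ℝ], ∃ y : ℍ[ℝ], f y = u₀ * f x * (↑U⁻¹ : A) := by
    intro x
    refine (hmem _).mp ?_
    have h' := SetLike.mul_mem_graded (SetLike.mul_mem_graded hu₀1 (fmem x)) hUinv
    rwa [show (1 + 0 + 1 : ZMod 2) = 0 from rfl] at h'
  obtain ⟨u, hfu⟩ := key qI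
  obtain ⟨v, hfv⟩ := key qJ
  have conj_mul : ∀ x y : ℍ[ℝ],
      (u₀ * f x * (↑U⁻¹ : A)) * (u₀ * f y * (↑U⁻¹ : A)) = u₀ * f (x * y) * (↑U⁻¹ : A) := by
    intro x y
    simp only [map_mul, mul_assoc]
    rw [← mul_assoc ((↑U⁻¹ : A)) u₀, hUu, one_mul]
  have conj_neg_one : u₀ * f (-1) * (↑U⁻¹ : A) = -1 := by
    rw [map_neg, map_one, mul_neg_one, neg_mul, hu₀U]
  have hu2 : u * u = -1 := by
    apply hf
    rw [map_mul, hfu, conj_mul, qII, conj_neg_one, map_neg, map_one]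
  have hv2 : v * v = -1 := by
    apply hf
    rw [map_mul, hfv, conj_mul, qJJ, conj_neg_one, map_neg, map_one]
  have huv : u * v = -(v * u) := by
    apply hf
    rw [map_mul, map_neg, map_mul, hfu, hfv, conj_mul, conj_mul, qIJ, map_neg,
      mul_neg, neg_mul]
  -- find q conjugating (i,j) to (u,v)
  obtain ⟨q, hq0, hqI, hqJ⟩ := exists_conj' u v hu2 hv2 huv
  have hfinv : f q⁻¹ * f q = 1 := by rw [← map_mul, inv_mul_cancel₀ hq0, map_one]
  have hfinv' : f q * f q⁻¹ = 1 := by rw [← map_mul, mul_inv_cancel₀ hq0, map_one]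
  set e₀ : A := f q⁻¹ * u₀ with he₀
  have he₀1 : e₀ ∈ 𝒜 1 := by
    have := SetLike.mul_mem_graded (fmem q⁻¹) hu₀1
    rwa [show (0 + 1 : ZMod 2) = 1 from rfl] at this
  -- commutation of e₀ with f qI and f qJ
  have hcomm : ∀ (w : ℍ[ℝ]) (z : ℍ[ℝ]), f z = u₀ * f w * (↑U⁻¹ : A) →
      z * q = q * w → e₀ * f w = f w * e₀ := by
    intro w z hfz hzq
    have h1 : u₀ * f w = f z * u₀ := by
      have : (u₀ * f w * (↑U⁻¹ : A)) * u₀ = f z * u₀ := by rw [hfz]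
      rwa [mul_assoc, hUu, mul_one] at this
    have h2 : q⁻¹ * z = w * q⁻¹ := by
      calc q⁻¹ * z = q⁻¹ * z * (q * q⁻¹) := by rw [mul_inv_cancel₀ hq0, mul_one]
        _ = q⁻¹ * (z * q) * q⁻¹ := by simp [mul_assoc]
        _ = q⁻¹ * (q * w) * q⁻¹ := by rw [hzq]
        _ = (q⁻¹ * q) * w * q⁻¹ := by simp [mul_assoc]
        _ = w * q⁻¹ := by rw [inv_mul_cancel₀ hq0, one_mul]
    calc e₀ * f w = f q⁻¹ * (u₀ * f w) := by rw [he₀, mul_assoc]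
      _ = f q⁻¹ * (f z * u₀) := by rw [h1]
      _ = f (q⁻¹ * z) * u₀ := by rw [map_mul, mul_assoc]
      _ = f (w * q⁻¹) * u₀ := by rw [h2]
      _ = f w * e₀ := by rw [map_mul, he₀, mul_assoc]
  have hcommI : e₀ * f qI = f qI * e₀ := hcomm qI u hfu hqI
  have hcommJ : e₀ * f qJ = f qJ * e₀ := hcomm qJ v hfv hqJ
  have hcommK : e₀ * (f qI * f qJ) = (f qI * f qJ) * e₀ := by
    rw [← mul_assoc, hcommI, mul_assoc, hcommJ, ← mul_assoc]
  have ecomm : ∀ x : ℍ[ℝ], e₀ * f x = f x * e₀ := by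
    intro x
    have hx := qdecomp x
    rw [show f x = f (x.re • 1 + x.imI • qI + x.imJ • qJ + x.imK • (qI * qJ)) from by
      rw [← hx]]
    simp only [map_add, map_smul, map_one, map_mul, mul_add, add_mul, mul_smul_comm,
      smul_mul_assoc, mul_one, one_mul]
    rw [hcommI, hcommJ, hcommK]
  -- e₀ squared is a nonzero real scalar
  have he₀sq : e₀ * e₀ ∈ 𝒜 0 := by
    have := SetLike.mul_mem_graded he₀1 he₀1
    rwa [show (1 + 1 : ZMod 2) = 0 from rfl] at this
  obtain ⟨c, hc⟩ := (hmem _).mp he₀sq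
  have hcI : c * qI = qI * c := by
    apply hf
    rw [map_mul, map_mul, hc, mul_assoc, hcommI, ← mul_assoc, hcommI, mul_assoc]
  have hcJ : c * qJ = qJ * c := by
    apply hf
    rw [map_mul, map_mul, hc, mul_assoc, hcommJ, ← mul_assoc, hcommJ, mul_assoc]
  have hcreal : c = algebraMap ℝ ℍ[ℝ] c.re := central_real' c hcI hcJ
  set r : ℝ := c.re with hr
  have hesq : e₀ * e₀ = algebraMap ℝ A r := by
    rw [← hc, hcreal]
    exact (f.comp_algebraMap ▸ rfl : f (algebraMap ℝ ℍ[ℝ] r) = algebraMap ℝ A r)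
  have hfqu : IsUnit (f q⁻¹) := ⟨⟨f q⁻¹, f q, hfinv, hfinv'⟩, rfl⟩
  have he₀unit : IsUnit e₀ := hfqu.mul ⟨U, hU⟩
  have hrne : r ≠ 0 := by
    intro h
    have : e₀ * e₀ = 0 := by rw [hesq, h, map_zero]
    exact (he₀unit.mul he₀unit).ne_zero this
  -- normalize
  set s : ℝ := Real.sqrt |r| with hs
  have hspos : 0 < s := Real.sqrt_pos.mpr (abs_pos.mpr hrne)
  have hss : s * s = |r| := Real.mul_self_sqrt (abs_nonneg r)
  refine ⟨s⁻¹ • e₀, Submodule.smul_mem _ _ he₀1, ?_, ?_, ?_⟩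
  · intro a ha
    obtain ⟨x, hx⟩ := (hmem a).mp ha
    rw [← hx, smul_mul_assoc, mul_smul_comm, ecomm]
  · have hee : (s⁻¹ • e₀) * (s⁻¹ • e₀) = (s⁻¹ * s⁻¹ * r) • (1 : A) := by
      rw [smul_mul_smul_comm, hesq, Algebra.algebraMap_eq_smul_one, smul_smul]
    have hcoef : s⁻¹ * s⁻¹ * r = |r|⁻¹ * r := by
      rw [← mul_inv, hss]
    rcases lt_or_gt_of_ne hrne with hneg | hpos
    · right
      rw [hee, hcoef, abs_of_neg hneg, ← neg_inv, neg_mul, inv_mul_cancel₀ hrne,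
        neg_smul, one_smul]
    · left
      rw [hee, hcoef, abs_of_pos hpos, inv_mul_cancel₀ hrne, one_smul]
  · -- spanning
    have hee : (s⁻¹ • e₀) * (s⁻¹ • e₀) = (s⁻¹ * s⁻¹ * r) • (1 : A) := by
      rw [smul_mul_smul_comm, hesq, Algebra.algebraMap_eq_smul_one, smul_smul]
    have hcoef : s⁻¹ * s⁻¹ * r = |r|⁻¹ * r := by rw [← mul_inv, hss]
    set e : A := s⁻¹ • e₀ with he
    have he1 : e ∈ 𝒜 1 := Submodule.smul_mem _ _ he₀1
    intro x
    have hsum : (decompose 𝒜 x 0 : A) + (decompose 𝒜 x 1 : A) = x := sum_decompose' 𝒜 x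
    obtain ⟨a, hax⟩ := (hmem _).mp (SetLike.coe_mem (decompose 𝒜 x 0))
    set x₁ : A := (decompose 𝒜 x 1 : A) with hx₁
    have hx₁m : x₁ ∈ 𝒜 1 := SetLike.coe_mem _
    have hx₁e : x₁ * e ∈ 𝒜 0 := by
      have := SetLike.mul_mem_graded hx₁m he1
      rwa [show (1 + 1 : ZMod 2) = 0 from rfl] at this
    obtain ⟨b, hbx⟩ := (hmem _).mp hx₁e
    have hee' : e * e = (|r|⁻¹ * r) • (1 : A) := by rw [← hcoef]; exact hee
    have habs : |r|⁻¹ * r = 1 ∨ |r|⁻¹ * r = -1 := by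
      rcases lt_or_gt_of_ne hrne with hneg | hpos
      · right
        rw [abs_of_neg hneg, ← neg_inv, neg_mul, inv_mul_cancel₀ hrne]
      · left
        rw [abs_of_pos hpos, inv_mul_cancel₀ hrne]
    rcases habs with h | h
    · refine ⟨a, b, ?_⟩
      have hee1 : e * e = 1 := by rw [hee', h, one_smul]
      have hx1 : x₁ = f b * e := by
        rw [hbx, mul_assoc, hee1, mul_one]
      rw [hax, ← hx1]
      exact hsum.symm
    · refine ⟨a, -b, ?_⟩
      have hee1 : e * e = -1 := by rw [hee', h, neg_smul, one_smul]
      have hx1 : x₁ = f (-b) * e := by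
        rw [map_neg, neg_mul, hbx, mul_assoc, hee1, mul_neg_one, neg_neg]
      rw [hax, ← hx1]
      exact hsum.symm
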